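/- Let y, w ∈ Área_n with Des(y) = Des(w), and let p ∈ W_n. Suppose that y·τ^{−1} ∈ Área_n and w·τ^{−1} ∈ Área_n for every τ with τ ≤_e p. Then Des(y·τ^{−1}) = Des(w·τ^{−1}) for every τ with τ ≤_e p. -/

import Mathlib

namespace BnPaper

/-- The generator `t`: swaps `1` and `-1`, fixing all other points. -/
def t : Equiv.Perm ℤ := Equiv.swap 1 (-1)

/-- The generator `s i`: swaps `i ↔ i+1` and `-i ↔ -(i+1)`. -/
def s (i : ℤ) : Equiv.Perm ℤ := Equiv.swap i (i + 1) * Equiv.swap (-i) (-(i + 1))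

/-- The descending product `s_j · s_{j-1} ⋯ s_i` (the identity when `i > j`). -/
def desc (i j : ℕ) : Equiv.Perm ℤ :=
  ((List.range (j + 1 - i)).map (fun k => s ((j : ℤ) - (k : ℤ)))).prod

/-- The ascending product `s_i · s_{i+1} ⋯ s_j` (the identity when `i > j`). -/
def asc (i j : ℕ) : Equiv.Perm ℤ :=
  ((List.range (j + 1 - i)).map (fun k => s ((i : ℤ) + (k : ℤ)))).prod

/-- `t_j = s_{j-1} ⋯ s_1 · t · s_1 ⋯ s_{j-1}`. -/
def tt (j : ℕ) : Equiv.Perm ℤ := desc 1 (j - 1) * t * (desc 1 (j - 1))⁻¹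

/-- The Coxeter generating set `{t, s_1, …, s_{n-1}}` of `W_n`. -/
def gens (n : ℕ) : Set (Equiv.Perm ℤ) :=
  insert t {g | ∃ i : ℕ, 1 ≤ i ∧ i ≤ n - 1 ∧ g = s (i : ℤ)}

/-- The Coxeter length: the least number of generators whose product is `w`. -/
noncomputable def len (n : ℕ) (w : Equiv.Perm ℤ) : ℕ :=
  sInf {k | ∃ l : List (Equiv.Perm ℤ), l.length = k ∧ (∀ g ∈ l, g ∈ gens n) ∧ l.prod = w}

/-- `W_n` realised as the signed permutations of `{-n, …, -1, 1, …, n}`: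
permutations of `ℤ` that are odd (`w(-i) = -w(i)`) and fix everything beyond `n` in
absolute value. -/
def W (n : ℕ) : Set (Equiv.Perm ℤ) :=
  {w | (∀ i : ℤ, w (-i) = -(w i)) ∧ ∀ i : ℤ, (n : ℤ) < |i| → w i = i}

/-- The right descent set `Des(w)`. -/
def Des (n : ℕ) (w : Equiv.Perm ℤ) : Set (Equiv.Perm ℤ) :=
  {g | g ∈ gens n ∧ len n (w * g) < len n w}

/-- The enhanced descent-set invariant
`ρ_m(w) = Des(w) ∪ {t_j : 2 ≤ j ≤ m, ℓ(w t_j) < ℓ(w)}`. -/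
def rho (n m : ℕ) (w : Equiv.Perm ℤ) : Set (Equiv.Perm ℤ) :=
  Des n w ∪ {g | ∃ j : ℕ, 2 ≤ j ∧ j ≤ m ∧ g = tt j ∧ len n (w * tt j) < len n w}

/-- `Área_n`: the negative entries of the row form appear in increasing order and
the positive entries in strictly decreasing order. -/
def Area (n : ℕ) : Set (Equiv.Perm ℤ) :=
  {w | w ∈ W n ∧ ∀ i j : ℤ, 1 ≤ i → i < j → j ≤ (n : ℤ) →
    (w i < 0 → w j < 0 → w i < w j) ∧ (0 < w i → 0 < w j → w j < w i)}

/-- The suffix relation `y ≤_e w`: `w = z · y` with `ℓ(w) = ℓ(z) + ℓ(y)`. -/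
def Suf (n : ℕ) (y w : Equiv.Perm ℤ) : Prop :=
  ∃ z, z ∈ W n ∧ w = z * y ∧ len n w = len n z + len n y

/-- `a_q = (t)(s_1 t)(s_2 s_1 t) ⋯ (s_{q-1} ⋯ s_1 t)`. -/
def aw (q : ℕ) : Equiv.Perm ℤ := ((List.range q).map (fun k => desc 1 k * t)).prod

/-- `b_q = (s_{q+1})(s_{q+2} s_{q+1}) ⋯ (s_{n-1} ⋯ s_{q+1})` (identity for `q ≥ n-1`). -/
def bw (n q : ℕ) : Equiv.Perm ℤ :=
  ((List.range (n - 1 - q)).map (fun k => desc (q + 1) (q + 1 + k))).prod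

/-- `σ_{n,q} = a_q · b_q`. -/
def sig (n q : ℕ) : Equiv.Perm ℤ := aw q * bw n q

/-- `p_{n,q} = (s_{n-q} ⋯ s_1)(s_{n-q+1} ⋯ s_2) ⋯ (s_{n-1} ⋯ s_q)`,
with `p_{n,0} = p_{n,n} = e`. -/
def p (n q : ℕ) : Equiv.Perm ℤ :=
  ((List.range q).map (fun m => desc (1 + m) (n - q + m))).prod

/-- `Π_{n,q} = (s_{n-q-1} ⋯ s_1) · t · p_{n,q}`. -/
def PiElt (n q : ℕ) : Equiv.Perm ℤ := desc 1 (n - q - 1) * t * p n q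

/-- `Υ(w) = {z ∈ Área_n : Des(z) = Des(w)}`. -/
def Ups (n : ℕ) (w : Equiv.Perm ℤ) : Set (Equiv.Perm ℤ) :=
  {z | z ∈ Area n ∧ Des n z = Des n w}

/-- The parabolic subgroup `W_J = ⟨s_1, …, s_{n-1}⟩`. -/
def WJ (n : ℕ) : Set (Equiv.Perm ℤ) :=
  ↑(Subgroup.closure {g | ∃ i : ℕ, 1 ≤ i ∧ i ≤ n - 1 ∧ g = s (i : ℤ)})

/-- The parabolic subgroup `W_K = ⟨t, s_1, …, s_{n-2}⟩`. -/
def WK (n : ℕ) : Set (Equiv.Perm ℤ) :=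
  ↑(Subgroup.closure (insert t {g | ∃ i : ℕ, 1 ≤ i ∧ i ≤ n - 2 ∧ g = s (i : ℤ)}))

/-- Knuth relation of type `I_k` : `w' = w · s_{i+1}` when
`w(i+1) < w(i) < w(i+2)` or `w(i+2) < w(i) < w(i+1)`. -/
def stepI (k : ℕ) (w w' : Equiv.Perm ℤ) : Prop :=
  ∃ i : ℤ, 1 ≤ i ∧ i ≤ (k : ℤ) - 2 ∧
    ((w (i + 1) < w i ∧ w i < w (i + 2)) ∨ (w (i + 2) < w i ∧ w i < w (i + 1))) ∧
    w' = w * s (i + 1)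

/-- Knuth relation of type `II_k` : `w' = w · s_i` when
`w(i+1) < w(i+2) < w(i)` or `w(i) < w(i+2) < w(i+1)`. -/
def stepII (k : ℕ) (w w' : Equiv.Perm ℤ) : Prop :=
  ∃ i : ℤ, 1 ≤ i ∧ i ≤ (k : ℤ) - 2 ∧
    ((w (i + 1) < w (i + 2) ∧ w (i + 2) < w i) ∨ (w i < w (i + 2) ∧ w (i + 2) < w (i + 1))) ∧
    w' = w * s i

/-- Knuth relation of type `III_k` : `w' = w · s_i` when `w(i)` and `w(i+1)` have
opposite signs. -/
def stepIII (k : ℕ) (w w' : Equiv.Perm ℤ) : Prop :=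
  ∃ i : ℤ, 1 ≤ i ∧ i ≤ (k : ℤ) - 1 ∧
    ((w i < 0 ∧ 0 < w (i + 1)) ∨ (w (i + 1) < 0 ∧ 0 < w i)) ∧
    w' = w * s i


/-! ### Auxiliary development -/

lemma t_apply (x : ℤ) : t x = if x = 1 then -1 else if x = -1 then 1 else x := by
  unfold t
  split_ifs with h1 h2
  · subst h1; simp
  · subst h2; simp
  · exact Equiv.swap_apply_of_ne_of_ne h1 h2

lemma s_apply (i : ℤ) (hi : 1 ≤ i) (x : ℤ) :
    s i x = if x = i then i + 1 else if x = i + 1 then i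
      else if x = -i then -(i+1) else if x = -(i+1) then -i else x := by
  unfold s
  have h1 : (Equiv.swap (-i) (-(i+1)) : Equiv.Perm ℤ) x =
      if x = -i then -(i+1) else if x = -(i+1) then -i else x := by
    split_ifs with h h'
    · subst h; simp
    · subst h'; simp
    · exact Equiv.swap_apply_of_ne_of_ne h h'
  have h2 : ∀ z : ℤ, (Equiv.swap i (i+1) : Equiv.Perm ℤ) z =
      if z = i then i + 1 else if z = i + 1 then i else z := by
    intro z
    split_ifs with h h'
    · subst h; simp
    · subst h'; simp
    · exact Equiv.swap_apply_of_ne_of_ne h h'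
  simp only [Equiv.Perm.mul_apply, h1, h2]
  split_ifs <;> omega
section Wlemmas
variable {n : ℕ} {w u : Equiv.Perm ℤ}

lemma one_mem_W : (1 : Equiv.Perm ℤ) ∈ W n := by
  constructor <;> intro i <;> simp

lemma mul_mem_W (hw : w ∈ W n) (hu : u ∈ W n) : w * u ∈ W n := by
  obtain ⟨hw1, hw2⟩ := hw
  obtain ⟨hu1, hu2⟩ := hu
  constructor
  · intro i; simp [Equiv.Perm.mul_apply, hu1, hw1]
  · intro i hi; simp [Equiv.Perm.mul_apply, hu2 i hi, hw2 i hi]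

lemma inv_mem_W (hw : w ∈ W n) : w⁻¹ ∈ W n := by
  obtain ⟨hw1, hw2⟩ := hw
  constructor
  · intro i
    apply w.injective
    rw [Equiv.Perm.inv_def, Equiv.apply_symm_apply, hw1, Equiv.apply_symm_apply]
  · intro i hi
    have := hw2 i hi
    conv_lhs => rw [← this]
    rw [Equiv.Perm.inv_def, Equiv.symm_apply_apply]

lemma W.zero (hw : w ∈ W n) : w 0 = 0 := by
  have := hw.1 0
  simp at this
  omega

lemma W.ne_zero (hw : w ∈ W n) {i : ℤ} (hi : i ≠ 0) : w i ≠ 0 := by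
  intro h
  have h0 : w 0 = 0 := W.zero hw
  exact hi (w.injective (h.trans h0.symm))

lemma W.abs_le (hw : w ∈ W n) {i : ℤ} (hi : |i| ≤ n) : |w i| ≤ n := by
  by_contra h
  push_neg at h
  have h2 := hw.2 (w i) h
  have h3 : w i = i := w.injective h2
  rw [h3] at h
  omega

lemma t_mem_W (hn : 1 ≤ n) : t ∈ W n := by
  constructor
  · intro i
    rw [t_apply, t_apply]
    split_ifs <;> omega
  · intro i hi
    rw [Int.abs_eq_natAbs] at hi
    rw [t_apply]
    split_ifs <;> omega

lemma s_mem_W {i : ℤ} (h1 : 1 ≤ i) (h2 : i + 1 ≤ n) : s i ∈ W n := by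
  constructor
  · intro x
    rw [s_apply i h1, s_apply i h1]
    split_ifs <;> omega
  · intro x hx
    rw [Int.abs_eq_natAbs] at hx
    rw [s_apply i h1]
    split_ifs <;> omega

lemma gens_subset_W (hn : 2 ≤ n) : gens n ⊆ W n := by
  intro g hg
  rcases hg with h | ⟨i, hi1, hi2, rfl⟩
  · rw [h]; exact t_mem_W (by omega)
  · exact s_mem_W (by exact_mod_cast hi1) (by omega)

lemma t_invol : t * t = 1 := by
  ext x
  simp only [Equiv.Perm.mul_apply, Equiv.Perm.one_apply, t_apply]
  split_ifs <;> simp_all <;> omega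

lemma s_invol {i : ℤ} (hi : 1 ≤ i) : s i * s i = 1 := by
  ext x
  simp only [Equiv.Perm.mul_apply, Equiv.Perm.one_apply, s_apply i hi]
  split_ifs <;> omega

lemma gens_invol {g : Equiv.Perm ℤ} (hg : g ∈ gens n) : g * g = 1 := by
  rcases hg with h | ⟨i, hi1, hi2, rfl⟩
  · rw [h]; exact t_invol
  · exact s_invol (by exact_mod_cast hi1)

end Wlemmas
/-! ### The length statistic -/

noncomputable def invSet (n : ℕ) (w : Equiv.Perm ℤ) : Finset (ℤ × ℤ) :=
  (Finset.Icc (1:ℤ) n ×ˢ Finset.Icc (1:ℤ) n).filter (fun p => p.1 < p.2 ∧ w p.2 < w p.1)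

noncomputable def negSum (n : ℕ) (w : Equiv.Perm ℤ) : ℕ :=
  ∑ i ∈ Finset.Icc (1:ℤ) n, (if w i < 0 then (-(w i)).toNat else 0)

noncomputable def Dstat (n : ℕ) (w : Equiv.Perm ℤ) : ℕ := (invSet n w).card + negSum n w

lemma mem_invSet {n : ℕ} {v : Equiv.Perm ℤ} {a b : ℤ} :
    (a, b) ∈ invSet n v ↔ 1 ≤ a ∧ a ≤ n ∧ 1 ≤ b ∧ b ≤ n ∧ a < b ∧ v b < v a := by
  simp only [invSet, Finset.mem_filter, Finset.mem_product, Finset.mem_Icc]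
  tauto

section Sstep
variable {n : ℕ} {w : Equiv.Perm ℤ} {i : ℤ}

lemma swap_fun (i x : ℤ) :
    (Equiv.swap i (i+1) : Equiv.Perm ℤ) x = if x = i then i + 1 else if x = i + 1 then i else x := by
  split_ifs with h h'
  · subst h; simp
  · subst h'; simp
  · exact Equiv.swap_apply_of_ne_of_ne h h'

lemma mul_s_apply (h1 : 1 ≤ i) {x : ℤ} (hx : 1 ≤ x) :
    (w * s i) x = w ((Equiv.swap i (i+1) : Equiv.Perm ℤ) x) := by
  rw [Equiv.Perm.mul_apply, s_apply i h1, swap_fun]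
  split_ifs <;> first | rfl | omega

lemma swap_mono (h1 : 1 ≤ i) {c d : ℤ} (hcd : c < d) (hne : ¬(c = i ∧ d = i + 1)) :
    (Equiv.swap i (i+1) : Equiv.Perm ℤ) c < (Equiv.swap i (i+1) : Equiv.Perm ℤ) d := by
  rw [swap_fun, swap_fun]
  split_ifs <;> omega

lemma swap_mem_Icc (h1 : 1 ≤ i) (h2 : i + 1 ≤ n) (x : ℤ) :
    x ∈ Finset.Icc (1:ℤ) n ↔ (Equiv.swap i (i+1) : Equiv.Perm ℤ) x ∈ Finset.Icc (1:ℤ) n := by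
  rw [swap_fun]
  simp only [Finset.mem_Icc]
  split_ifs <;> omega

lemma negSum_mul_s (h1 : 1 ≤ i) (h2 : i + 1 ≤ (n:ℤ)) :
    negSum n (w * s i) = negSum n w := by
  unfold negSum
  refine Finset.sum_equiv (Equiv.swap i (i+1)) (fun x => swap_mem_Icc h1 h2 x) ?_
  intro x hx
  rw [Finset.mem_Icc] at hx
  rw [mul_s_apply h1 hx.1]

lemma invCard_mul_s_of_lt (h1 : 1 ≤ i) (h2 : i + 1 ≤ (n:ℤ)) (hlt : w i < w (i+1)) :
    (invSet n (w * s i)).card = (invSet n w).card + 1 := by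
  set σ : Equiv.Perm ℤ := Equiv.swap i (i+1) with hσ
  have hσσ : ∀ x : ℤ, σ (σ x) = x := fun x => Equiv.swap_apply_self i (i+1) x
  have key : invSet n (w * s i) = insert (i, i+1) ((invSet n w).image (fun p => (σ p.1, σ p.2))) := by
    ext ⟨a, b⟩
    simp only [Finset.mem_insert, Finset.mem_image, Prod.mk.injEq, Prod.exists]
    constructor
    · intro h
      rw [mem_invSet] at h
      obtain ⟨ha1, ha2, hb1, hb2, hab, hv⟩ := h
      by_cases hcase : a = i ∧ b = i + 1
      · left; exact ⟨hcase.1, hcase.2⟩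
      · right
        refine ⟨σ a, σ b, ?_, ?_, ?_⟩
        · rw [mem_invSet]
          have hma := (swap_mem_Icc h1 h2 a).mp (by rw [Finset.mem_Icc]; exact ⟨ha1, ha2⟩)
          have hmb := (swap_mem_Icc h1 h2 b).mp (by rw [Finset.mem_Icc]; exact ⟨hb1, hb2⟩)
          rw [Finset.mem_Icc] at hma hmb
          refine ⟨hma.1, hma.2, hmb.1, hmb.2, swap_mono h1 hab hcase, ?_⟩
          rw [mul_s_apply h1 ha1, mul_s_apply h1 hb1] at hv
          exact hv
        · exact hσσ a
        · exact hσσ b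
    · intro h
      rcases h with ⟨ha, hb⟩ | ⟨c, d, hcd, hc, hd⟩
      · rw [mem_invSet, ha, hb]
        refine ⟨h1, by omega, by omega, h2, by omega, ?_⟩
        rw [mul_s_apply h1 h1, mul_s_apply h1 (by omega : (1:ℤ) ≤ i + 1)]
        rw [Equiv.swap_apply_left, Equiv.swap_apply_right]
        exact hlt
      · rw [mem_invSet] at hcd ⊢
        obtain ⟨hc1, hc2, hd1, hd2, hcdlt, hv⟩ := hcd
        have hne : ¬(c = i ∧ d = i + 1) := by
          rintro ⟨rfl, rfl⟩; omega
        have hma := (swap_mem_Icc h1 h2 c).mp (by rw [Finset.mem_Icc]; exact ⟨hc1, hc2⟩)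
        have hmb := (swap_mem_Icc h1 h2 d).mp (by rw [Finset.mem_Icc]; exact ⟨hd1, hd2⟩)
        rw [Finset.mem_Icc] at hma hmb
        subst hc; subst hd
        refine ⟨hma.1, hma.2, hmb.1, hmb.2, swap_mono h1 hcdlt hne, ?_⟩
        rw [mul_s_apply h1 hma.1, mul_s_apply h1 hmb.1, hσσ, hσσ]
        exact hv
  rw [key, Finset.card_insert_of_notMem, Finset.card_image_of_injOn]
  · intro p hp q hq hpq
    have : (σ (σ p.1), σ (σ p.2)) = (σ (σ q.1), σ (σ q.2)) := by
      simp only [Prod.mk.injEq] at hpq ⊢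
      exact ⟨congrArg σ hpq.1, congrArg σ hpq.2⟩
    simpa [hσσ, Prod.ext_iff] using this
  · intro hmem
    simp only [Finset.mem_image, Prod.mk.injEq, Prod.exists] at hmem
    obtain ⟨c, d, hcd, hc, hd⟩ := hmem
    have hc' : c = σ i := by rw [← hc, hσσ]
    have hd' : d = σ (i+1) := by rw [← hd, hσσ]
    rw [Equiv.swap_apply_left] at hc'
    rw [Equiv.swap_apply_right] at hd'
    rw [mem_invSet] at hcd
    omega

lemma Dstat_mul_s_of_lt (h1 : 1 ≤ i) (h2 : i + 1 ≤ (n:ℤ)) (hlt : w i < w (i+1)) :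
    Dstat n (w * s i) = Dstat n w + 1 := by
  unfold Dstat
  rw [invCard_mul_s_of_lt h1 h2 hlt, negSum_mul_s h1 h2]
  ring

lemma Dstat_mul_s_of_gt (h1 : 1 ≤ i) (h2 : i + 1 ≤ (n:ℤ)) (hlt : w (i+1) < w i) :
    Dstat n w = Dstat n (w * s i) + 1 := by
  have hws : (w * s i) * s i = w := by rw [mul_assoc, s_invol h1, mul_one]
  have hi : (w * s i) i < (w * s i) (i + 1) := by
    rw [mul_s_apply h1 h1, mul_s_apply h1 (by omega : (1:ℤ) ≤ i + 1),
      Equiv.swap_apply_left, Equiv.swap_apply_right]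
    exact hlt
  have := Dstat_mul_s_of_lt (w := w * s i) h1 h2 hi
  rwa [hws] at this

end Sstep
section Tstep
variable {n : ℕ} {w : Equiv.Perm ℤ}

lemma mul_t_apply_one : (w * t) 1 = w (-1) := by
  rw [Equiv.Perm.mul_apply, t_apply]; norm_num

lemma mul_t_apply_of {x : ℤ} (hx : 2 ≤ x) : (w * t) x = w x := by
  rw [Equiv.Perm.mul_apply, t_apply]
  split_ifs <;> first | rfl | omega

lemma card_abs_lt (hw : w ∈ W n) {a : ℤ} (ha : 0 < a) (han : a ≤ (n:ℤ))
    (haw : w 1 = a ∨ w 1 = -a) :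
    ((Finset.Icc (2:ℤ) n).filter (fun b => -a < w b ∧ w b < a)).card = (a - 1).toNat := by
  have hinj := w.injective
  have hodd := hw.1
  rw [show (a-1).toNat = (Finset.Icc (1:ℤ) (a-1)).card by rw [Int.card_Icc]; congr 1; ring]
  apply Finset.card_nbij (fun b => |w b|)
  · intro b hb
    simp only [Finset.mem_coe, Finset.coe_filter, Set.mem_setOf_eq, Finset.coe_Icc, Set.mem_Icc, Finset.mem_filter, Finset.mem_Icc] at hb ⊢
    have : w b ≠ 0 := W.ne_zero hw (by omega)
    rcases abs_cases (w b) with ⟨h, _⟩ | ⟨h, _⟩ <;> omega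
  · intro b hb b' hb' hbb
    have hbb' : |w b| = |w b'| := hbb
    simp only [Finset.coe_filter, Set.mem_setOf_eq, Finset.mem_Icc] at hb hb'
    have h2 : w b = w b' ∨ w b = -(w b') := by
      rcases abs_cases (w b) with ⟨h, _⟩ | ⟨h, _⟩ <;>
        rcases abs_cases (w b') with ⟨h', _⟩ | ⟨h', _⟩ <;> omega
    rcases h2 with h | h
    · exact hinj h
    · rw [← hodd b'] at h
      have := hinj h
      omega
  · intro m hm
    simp only [Finset.coe_Icc, Set.mem_Icc] at hm
    obtain ⟨hm1, hm2⟩ := hm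
    obtain ⟨j, hwj⟩ : ∃ j, w j = m := ⟨w.symm m, w.apply_symm_apply m⟩
    have hj0 : j ≠ 0 := by intro h; rw [h] at hwj; have := W.zero hw; omega
    have hjn : |j| ≤ (n:ℤ) := by
      by_contra h
      push_neg at h
      have h2 := hw.2 j h
      rw [h2] at hwj
      subst hwj
      rcases abs_cases j with ⟨hja, _⟩ | ⟨hja, _⟩ <;> omega
    have hj1 : j ≠ 1 := by intro h; rw [h] at hwj; omega
    have hjm1 : j ≠ -1 := by
      intro h
      rw [h] at hwj
      have h3 : w (-1) = -(w 1) := hodd 1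
      omega
    have hwnj : w (-j) = -(w j) := hodd j
    rcases abs_cases j with ⟨hja, hjs⟩ | ⟨hja, hjs⟩
    · refine ⟨j, ?_, ?_⟩
      · simp only [Finset.coe_filter, Set.mem_setOf_eq, Finset.mem_Icc]
        rw [hja] at hjn
        refine ⟨⟨by omega, by omega⟩, by omega, by omega⟩
      · show |w j| = m
        rw [hwj]; exact abs_of_pos (by omega)
    · refine ⟨-j, ?_, ?_⟩
      · simp only [Finset.coe_filter, Set.mem_setOf_eq, Finset.mem_Icc]
        rw [hja] at hjn
        rw [hwnj, hwj]
        refine ⟨⟨by omega, by omega⟩, by omega, by omega⟩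
      · show |w (-j)| = m
        rw [hwnj, hwj, abs_neg]; exact abs_of_pos (by omega)

end Tstep
section Tstep2
variable {n : ℕ} {w v : Equiv.Perm ℤ}

lemma invCard_split (hn : 1 ≤ n) (v : Equiv.Perm ℤ) :
    (invSet n v).card = ((Finset.Icc (2:ℤ) n).filter (fun b => v b < v 1)).card
      + ((invSet n v).filter (fun p => 1 < p.1)).card := by
  have hsplit := Finset.card_filter_add_card_filter_not
    (s := invSet n v) (p := fun p => p.1 = 1)
  have e1 : ((invSet n v).filter (fun p => p.1 = 1)).card
      = ((Finset.Icc (2:ℤ) n).filter (fun b => v b < v 1)).card := by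
    apply Finset.card_nbij (fun p => p.2)
    · intro p hp
      rw [Finset.mem_coe, Finset.mem_filter] at hp
      obtain ⟨hp1, hp2⟩ := hp
      rcases p with ⟨pa, pb⟩
      rw [mem_invSet] at hp1
      simp only at hp2
      subst hp2
      simp only [Finset.mem_coe, Finset.mem_filter, Finset.mem_Icc]
      exact ⟨⟨by omega, by omega⟩, hp1.2.2.2.2.2⟩
    · intro p hp q hq hpq
      simp only [Finset.coe_filter, Set.mem_setOf_eq] at hp hq
      ext
      · rw [hp.2, hq.2]
      · exact hpq
    · intro b hb
      simp only [Finset.coe_filter, Set.mem_setOf_eq, Finset.mem_Icc] at hb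
      refine ⟨(1, b), ?_, rfl⟩
      simp only [Finset.coe_filter, Set.mem_setOf_eq, mem_invSet]
      refine ⟨⟨le_refl 1, by exact_mod_cast hn, by omega, by omega, by omega, hb.2⟩, trivial⟩
  have e2 : (invSet n v).filter (fun p => ¬ p.1 = 1) = (invSet n v).filter (fun p => 1 < p.1) := by
    apply Finset.filter_congr
    rintro ⟨pa, pb⟩ hp
    rw [mem_invSet] at hp
    simp only
    omega
  rw [e1, e2] at hsplit
  omega

lemma Bset_mul_t :
    (invSet n (w * t)).filter (fun p => 1 < p.1) = (invSet n w).filter (fun p => 1 < p.1) := by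
  ext ⟨a, b⟩
  simp only [Finset.mem_filter, mem_invSet]
  constructor
  · rintro ⟨⟨h1, h2, h3, h4, h5, h6⟩, ha⟩
    rw [mul_t_apply_of (by omega), mul_t_apply_of (by omega)] at h6
    exact ⟨⟨h1, h2, h3, h4, h5, h6⟩, ha⟩
  · rintro ⟨⟨h1, h2, h3, h4, h5, h6⟩, ha⟩
    rw [← mul_t_apply_of (w := w) (by omega : (2:ℤ) ≤ a),
        ← mul_t_apply_of (w := w) (by omega : (2:ℤ) ≤ b)] at h6
    exact ⟨⟨h1, h2, h3, h4, h5, h6⟩, ha⟩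

lemma negSum_split (hn : 1 ≤ n) (v : Equiv.Perm ℤ) :
    negSum n v = (if v 1 < 0 then (-(v 1)).toNat else 0)
      + ∑ x ∈ Finset.Icc (2:ℤ) n, (if v x < 0 then (-(v x)).toNat else 0) := by
  unfold negSum
  have h : Finset.Icc (1:ℤ) n = insert (1:ℤ) (Finset.Icc (2:ℤ) (n:ℤ)) := by
    ext x
    simp only [Finset.mem_Icc, Finset.mem_insert]
    omega
  rw [h, Finset.sum_insert (by simp [Finset.mem_Icc])]

lemma negRest_mul_t :
    ∑ x ∈ Finset.Icc (2:ℤ) n, (if (w * t) x < 0 then (-((w * t) x)).toNat else 0)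
      = ∑ x ∈ Finset.Icc (2:ℤ) n, (if w x < 0 then (-(w x)).toNat else 0) := by
  apply Finset.sum_congr rfl
  intro x hx
  rw [Finset.mem_Icc] at hx
  rw [mul_t_apply_of hx.1]

lemma Dstat_mul_t_of_pos (hn : 1 ≤ n) (hw : w ∈ W n) (hpos : 0 < w 1) :
    Dstat n (w * t) = Dstat n w + 1 := by
  have hodd := hw.1
  have han : w 1 ≤ (n:ℤ) := by
    have h := W.abs_le hw (i := 1) (by rw [abs_one]; exact_mod_cast hn)
    rw [abs_of_pos hpos] at h
    exact h
  have hwm1 : w (-1) = -(w 1) := hodd 1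
  have hwbne : ∀ b : ℤ, 2 ≤ b → w b ≠ -(w 1) ∧ w b ≠ w 1 := by
    intro b hb
    constructor
    · intro h
      rw [← hwm1] at h
      have := w.injective h
      omega
    · intro h
      have := w.injective h
      omega
  have hA : ((Finset.Icc (2:ℤ) n).filter (fun b => w b < w 1)).card
      = ((Finset.Icc (2:ℤ) n).filter (fun b => w b < -(w 1))).card + (w 1 - 1).toNat := by
    have hsplit := Finset.card_filter_add_card_filter_not
      (s := (Finset.Icc (2:ℤ) n).filter (fun b => w b < w 1)) (p := fun b => w b < -(w 1))
    rw [Finset.filter_filter, Finset.filter_filter] at hsplit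
    have e1 : (Finset.Icc (2:ℤ) n).filter (fun b => w b < w 1 ∧ w b < -(w 1))
        = (Finset.Icc (2:ℤ) n).filter (fun b => w b < -(w 1)) := by
      apply Finset.filter_congr
      intro b hb
      constructor
      · exact fun h => h.2
      · intro h; exact ⟨by omega, h⟩
    have e2 : (Finset.Icc (2:ℤ) n).filter (fun b => w b < w 1 ∧ ¬ w b < -(w 1))
        = (Finset.Icc (2:ℤ) n).filter (fun b => -(w 1) < w b ∧ w b < w 1) := by
      apply Finset.filter_congr
      intro b hb
      rw [Finset.mem_Icc] at hb
      have := (hwbne b hb.1).1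
      omega
    rw [e1, e2] at hsplit
    rw [card_abs_lt hw hpos han (Or.inl rfl)] at hsplit
    omega
  have eA : (Finset.Icc (2:ℤ) n).filter (fun b => (w * t) b < (w * t) 1)
      = (Finset.Icc (2:ℤ) n).filter (fun b => w b < -(w 1)) := by
    apply Finset.filter_congr
    intro b hb
    rw [Finset.mem_Icc] at hb
    rw [mul_t_apply_of hb.1, mul_t_apply_one, hwm1]
  have h1t : (w * t) 1 = -(w 1) := by rw [mul_t_apply_one, hwm1]
  rw [Dstat, Dstat, invCard_split hn (w * t), invCard_split hn w,
    negSum_split hn (w * t), negSum_split hn w, Bset_mul_t, negRest_mul_t, eA, hA, h1t]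
  rw [if_pos (by omega : -(w 1) < 0), if_neg (by omega : ¬ w 1 < 0)]
  omega

lemma Dstat_mul_t_of_neg (hn : 1 ≤ n) (hw : w ∈ W n) (hneg : w 1 < 0) :
    Dstat n w = Dstat n (w * t) + 1 := by
  have hwt : (w * t) * t = w := by rw [mul_assoc, t_invol, mul_one]
  have h1 : 0 < (w * t) 1 := by
    rw [mul_t_apply_one, hw.1 1]
    omega
  have := Dstat_mul_t_of_pos hn (mul_mem_W hw (t_mem_W hn)) h1
  rwa [hwt] at this

end Tstep2
section LenTheory
variable {n : ℕ} {w u : Equiv.Perm ℤ}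

lemma eq_one_of_incr (hw : w ∈ W n) (h1 : 0 < w 1)
    (hmono : ∀ i : ℤ, 1 ≤ i → i + 1 ≤ (n:ℤ) → w i < w (i + 1)) : w = 1 := by
  have hn1 : 1 ≤ n ∨ w = 1 := by
    by_cases h : 1 ≤ n
    · exact Or.inl h
    · right
      interval_cases n
      ext x
      have := hw.2 x
      simp only [Nat.cast_zero] at this
      rcases abs_cases x with ⟨ha, _⟩ | ⟨ha, _⟩
      · by_cases hx : x = 0
        · subst hx; simpa using W.zero hw
        · simpa using this (by omega)
      · simpa using this (by omega)
  rcases hn1 with hn1 | h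
  swap
  · exact h
  have hge : ∀ i : ℤ, 1 ≤ i → i ≤ (n:ℤ) → i ≤ w i := by
    have := Int.le_induction (motive := fun i _ => i ≤ (n:ℤ) → i ≤ w i) (m := 1)
      (by intro _; omega)
      (by
        intro i hi IH hin
        have h2 := hmono i hi hin
        have h3 : i ≤ w i := IH (by omega)
        omega)
    intro i hi hin
    exact this i hi hin
  have hle : ∀ i : ℤ, i ≤ (n:ℤ) → 1 ≤ i → w i ≤ i := by
    have := Int.le_induction_down (motive := fun i _ => 1 ≤ i → w i ≤ i) (m := (n:ℤ))
      (by
        intro _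
        have h := W.abs_le hw (i := (n:ℤ)) (by rw [abs_of_nonneg (by positivity)])
        rcases abs_cases (w (n:ℤ)) with ⟨ha, _⟩ | ⟨ha, _⟩ <;> omega)
      (by
        intro i hi IH h1i
        have h2 := hmono (i - 1) h1i (by omega)
        have h3 : w i ≤ i := IH (by omega)
        have h4 : i - 1 + 1 = i := by ring
        rw [h4] at h2
        omega)
    exact this
  have key : ∀ i : ℤ, 1 ≤ i → i ≤ (n:ℤ) → w i = i := by
    intro i h1i h2i
    have := hge i h1i h2i
    have := hle i h2i h1i
    omega
  ext x
  simp only [Equiv.Perm.one_apply]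
  by_cases hx0 : x = 0
  · subst hx0; exact W.zero hw
  by_cases hxn : (n:ℤ) < |x|
  · exact hw.2 x hxn
  push_neg at hxn
  rcases abs_cases x with ⟨ha, hs⟩ | ⟨ha, hs⟩
  · exact key x (by omega) (by omega)
  · have hodd := hw.1 (-x)
    have hxx : -(-x) = x := by ring
    rw [hxx] at hodd
    have := key (-x) (by omega) (by omega)
    rw [hodd, this]
    ring

lemma Dstat_one : Dstat n 1 = 0 := by
  unfold Dstat invSet negSum
  have h1 : ((Finset.Icc (1:ℤ) (n:ℤ) ×ˢ Finset.Icc (1:ℤ) (n:ℤ)).filter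
      (fun p => p.1 < p.2 ∧ (1 : Equiv.Perm ℤ) p.2 < (1 : Equiv.Perm ℤ) p.1)) = ∅ := by
    apply Finset.filter_false_of_mem
    rintro ⟨a, b⟩ _
    simp only [Equiv.Perm.one_apply]
    omega
  rw [h1, Finset.card_empty, Nat.zero_add]
  apply Finset.sum_eq_zero
  intro i hi
  rw [Finset.mem_Icc] at hi
  simp only [Equiv.Perm.one_apply]
  exact if_neg (by omega)

lemma eq_one_of_Dstat_eq_zero (hn : 1 ≤ n) (hw : w ∈ W n) (h : Dstat n w = 0) : w = 1 := by
  unfold Dstat at h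
  have hinv : (invSet n w).card = 0 := by omega
  have hneg : negSum n w = 0 := by omega
  rw [Finset.card_eq_zero] at hinv
  have hpos : ∀ i : ℤ, 1 ≤ i → i ≤ (n:ℤ) → 0 < w i := by
    intro i h1 h2
    have hmem : i ∈ Finset.Icc (1:ℤ) (n:ℤ) := by rw [Finset.mem_Icc]; exact ⟨h1, h2⟩
    have := Finset.sum_eq_zero_iff.mp hneg i hmem
    have hne := W.ne_zero hw (show i ≠ 0 by omega)
    by_contra hcon
    push_neg at hcon
    rw [if_pos (by omega)] at this
    omega
  apply eq_one_of_incr hw (hpos 1 le_rfl (by exact_mod_cast hn))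
  intro i h1 h2
  have hmem : (i, i+1) ∉ invSet n w := by rw [hinv]; exact Finset.notMem_empty _
  rw [mem_invSet] at hmem
  push_neg at hmem
  have hne : w i ≠ w (i + 1) := fun hc => by
    have := w.injective hc
    omega
  have := hmem (by omega) (by omega) (by omega) (by omega) (by omega)
  omega

def ExprW (n : ℕ) (w : Equiv.Perm ℤ) : Prop :=
  ∃ l : List (Equiv.Perm ℤ), (∀ g ∈ l, g ∈ gens n) ∧ l.prod = w

lemma len_le {l : List (Equiv.Perm ℤ)} (hl : ∀ g ∈ l, g ∈ gens n) (hp : l.prod = w) :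
    len n w ≤ l.length :=
  Nat.sInf_le ⟨l, rfl, hl, hp⟩

lemma exists_min_word (h : ExprW n w) :
    ∃ l : List (Equiv.Perm ℤ), l.length = len n w ∧ (∀ g ∈ l, g ∈ gens n) ∧ l.prod = w := by
  obtain ⟨l, hl, hp⟩ := h
  exact Nat.sInf_mem (⟨l.length, l, rfl, hl, hp⟩ :
    {k | ∃ l : List (Equiv.Perm ℤ), l.length = k ∧ (∀ g ∈ l, g ∈ gens n) ∧ l.prod = w}.Nonempty)

lemma prod_mem_W (hn : 2 ≤ n) {l : List (Equiv.Perm ℤ)} (hl : ∀ g ∈ l, g ∈ gens n) :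
    l.prod ∈ W n := by
  induction l with
  | nil => exact one_mem_W
  | cons g l ih =>
    rw [List.prod_cons]
    exact mul_mem_W (gens_subset_W hn (hl g (List.mem_cons_self))) (ih fun g hg => hl g (List.mem_cons_of_mem _ hg))

lemma Dstat_mul_gen (hn : 2 ≤ n) (hu : u ∈ W n) {g : Equiv.Perm ℤ} (hg : g ∈ gens n) :
    Dstat n (u * g) = Dstat n u + 1 ∨ Dstat n u = Dstat n (u * g) + 1 := by
  rcases hg with h | ⟨i, hi1, hi2, rfl⟩
  · subst h
    rcases (W.ne_zero hu (show (1:ℤ) ≠ 0 by omega)).lt_or_gt with h | h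
    · exact Or.inr (Dstat_mul_t_of_neg (by omega) hu h)
    · exact Or.inl (Dstat_mul_t_of_pos (by omega) hu h)
  · have h1 : 1 ≤ (i:ℤ) := by exact_mod_cast hi1
    have h2 : (i:ℤ) + 1 ≤ (n:ℤ) := by omega
    have hne : u i ≠ u ((i:ℤ) + 1) := fun hc => by
      have := u.injective hc
      omega
    rcases hne.lt_or_gt with h | h
    · exact Or.inl (Dstat_mul_s_of_lt h1 h2 h)
    · exact Or.inr (Dstat_mul_s_of_gt h1 h2 h)

lemma Dstat_le_wordlen (hn : 2 ≤ n) (l : List (Equiv.Perm ℤ)) (hl : ∀ g ∈ l, g ∈ gens n) :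
    Dstat n l.prod ≤ l.length := by
  induction l using List.reverseRecOn with
  | nil => simp [Dstat_one]
  | append_singleton l g ih =>
    have hl' : ∀ g ∈ l, g ∈ gens n := fun g hg => hl g (List.mem_append_left _ hg)
    have hg : g ∈ gens n := hl g (List.mem_append_right _ (List.mem_singleton_self g))
    have hu : l.prod ∈ W n := prod_mem_W hn hl'
    have hd := Dstat_mul_gen hn hu hg
    have := ih hl'
    rw [List.prod_append, List.prod_singleton]
    rw [List.length_append, List.length_singleton]
    omega

lemma W_expr_len (hn : 2 ≤ n) : ∀ w ∈ W n, ExprW n w ∧ len n w = Dstat n w := by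
  suffices H : ∀ k : ℕ, ∀ w ∈ W n, Dstat n w = k → ExprW n w ∧ len n w = Dstat n w by
    intro w hw; exact H (Dstat n w) w hw rfl
  intro k
  induction k using Nat.strong_induction_on with
  | _ k IH =>
  intro w hw hk
  rcases Nat.eq_zero_or_pos k with hk0 | hkpos
  · subst hk0
    have hw1 : w = 1 := eq_one_of_Dstat_eq_zero (by omega) hw hk
    subst hw1
    refine ⟨⟨[], by simp, rfl⟩, ?_⟩
    have h1 : len n 1 ≤ 0 := len_le (l := []) (by simp) rfl
    omega
  · -- find descent
    have hstep : ∀ g ∈ gens n, Dstat n w = Dstat n (w * g) + 1 →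
        ExprW n w ∧ len n w = Dstat n w := by
      intro g hg hD
      have hwg : w * g ∈ W n := mul_mem_W hw (gens_subset_W hn hg)
      obtain ⟨hE, hlen⟩ := IH (Dstat n (w * g)) (by omega) (w * g) hwg rfl
      obtain ⟨l, hl1, hl2, hl3⟩ := exists_min_word hE
      have hprod : (l ++ [g]).prod = w := by
        rw [List.prod_append, List.prod_singleton, hl3, mul_assoc, gens_invol hg, mul_one]
      have hgens : ∀ x ∈ l ++ [g], x ∈ gens n := by
        intro x hx
        rcases List.mem_append.mp hx with h | h
        · exact hl2 x h
        · rw [List.mem_singleton.mp h]; exact hg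
      have hExpr : ExprW n w := ⟨l ++ [g], hgens, hprod⟩
      refine ⟨hExpr, ?_⟩
      have hub : len n w ≤ l.length + 1 := by
        have := len_le hgens hprod
        rwa [List.length_append, List.length_singleton] at this
      have hlb : Dstat n w ≤ len n w := by
        obtain ⟨m, hm1, hm2, hm3⟩ := exists_min_word hExpr
        have := Dstat_le_wordlen hn m hm2
        rw [hm3] at this
        omega
      omega
    by_cases hneg : w 1 < 0
    · exact hstep t (Or.inl rfl) (Dstat_mul_t_of_neg (by omega) hw hneg)
    · by_cases hex : ∃ i : ℤ, 1 ≤ i ∧ i + 1 ≤ (n:ℤ) ∧ w (i + 1) < w i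
      · obtain ⟨i, h1, h2, h3⟩ := hex
        have hg : s i ∈ gens n := by
          right
          exact ⟨i.toNat, by omega, by omega, by rw [Int.toNat_of_nonneg (by omega)]⟩
        exact hstep (s i) hg (Dstat_mul_s_of_gt h1 h2 h3)
      · exfalso
        push_neg at hex
        have h1 : 0 < w 1 := by
          have := W.ne_zero hw (show (1:ℤ) ≠ 0 by omega)
          omega
        have hmono : ∀ i : ℤ, 1 ≤ i → i + 1 ≤ (n:ℤ) → w i < w (i + 1) := by
          intro i hi1 hi2
          have := hex i hi1 hi2
          have hne : w i ≠ w (i + 1) := fun hc => by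
            have := w.injective hc
            omega
          omega
        have := eq_one_of_incr hw h1 hmono
        subst this
        rw [Dstat_one] at hk
        omega

lemma len_eq_Dstat (hn : 2 ≤ n) (hw : w ∈ W n) : len n w = Dstat n w :=
  (W_expr_len hn w hw).2

lemma exprW_of_mem (hn : 2 ≤ n) (hw : w ∈ W n) : ExprW n w :=
  (W_expr_len hn w hw).1

lemma des_t_iff (hn : 2 ≤ n) (hw : w ∈ W n) : len n (w * t) < len n w ↔ w 1 < 0 := by
  have hwt : w * t ∈ W n := mul_mem_W hw (t_mem_W (by omega))
  rw [len_eq_Dstat hn hw, len_eq_Dstat hn hwt]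
  rcases (W.ne_zero hw (show (1:ℤ) ≠ 0 by omega)).lt_or_gt with h | h
  · have := Dstat_mul_t_of_neg (show 1 ≤ n by omega) hw h
    constructor
    · intro _; exact h
    · intro _; omega
  · have := Dstat_mul_t_of_pos (show 1 ≤ n by omega) hw h
    constructor
    · intro hc; omega
    · intro hc; omega

lemma des_s_iff (hn : 2 ≤ n) (hw : w ∈ W n) {i : ℤ} (h1 : 1 ≤ i) (h2 : i + 1 ≤ (n:ℤ)) :
    len n (w * s i) < len n w ↔ w (i + 1) < w i := by
  have hws : w * s i ∈ W n := mul_mem_W hw (s_mem_W h1 h2)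
  rw [len_eq_Dstat hn hw, len_eq_Dstat hn hws]
  have hne : w i ≠ w (i + 1) := fun hc => by
    have := w.injective hc
    omega
  rcases hne.lt_or_gt with h | h
  · have := Dstat_mul_s_of_lt h1 h2 h
    constructor
    · intro hc; omega
    · intro hc; omega
  · have := Dstat_mul_s_of_gt h1 h2 h
    constructor
    · intro _; exact h
    · intro _; omega

end LenTheory
section DesArea
variable {n : ℕ} {w u v y z : Equiv.Perm ℤ}

lemma len_mul_le (hn : 2 ≤ n) (hu : u ∈ W n) (hv : v ∈ W n) :
    len n (u * v) ≤ len n u + len n v := by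
  obtain ⟨lu, h1, h2, h3⟩ := exists_min_word (exprW_of_mem hn hu)
  obtain ⟨lv, k1, k2, k3⟩ := exists_min_word (exprW_of_mem hn hv)
  have hp : (lu ++ lv).prod = u * v := by rw [List.prod_append, h3, k3]
  have hle := len_le (l := lu ++ lv)
    (by intro x hx; rcases List.mem_append.mp hx with h | h; exacts [h2 x h, k2 x h]) hp
  rwa [List.length_append, h1, k1] at hle

lemma len_mul_gen_le (hn : 2 ≤ n) (hu : u ∈ W n) {g : Equiv.Perm ℤ} (hg : g ∈ gens n) :
    len n (u * g) ≤ len n u + 1 := by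
  have h := len_mul_le hn hu (gens_subset_W hn hg)
  have hg1 : len n g ≤ 1 := len_le (l := [g]) (by simp [hg]) (by simp)
  omega

lemma t_ne_s {i : ℤ} (hi : 1 ≤ i) : t ≠ s i := by
  intro h
  have h1 : t (-1) = s i (-1) := by rw [h]
  rw [t_apply] at h1
  norm_num at h1
  rw [s_apply i hi] at h1
  split_ifs at h1 <;> omega

lemma s_injective {i j : ℤ} (hi : 1 ≤ i) (hj : 1 ≤ j) (h : s i = s j) : i = j := by
  have h1 : s i i = s j i := by rw [h]
  rw [s_apply i hi, s_apply j hj] at h1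
  split_ifs at h1 <;> omega

lemma mem_Des_iff (hn : 2 ≤ n) (hw : w ∈ W n) {g : Equiv.Perm ℤ} :
    g ∈ Des n w ↔ (g = t ∧ w 1 < 0) ∨
      ∃ i : ℤ, 1 ≤ i ∧ i + 1 ≤ (n:ℤ) ∧ g = s i ∧ w (i + 1) < w i := by
  constructor
  · rintro ⟨hg, hlt⟩
    rcases hg with h | ⟨i, hi1, hi2, rfl⟩
    · subst h
      exact Or.inl ⟨rfl, (des_t_iff hn hw).mp hlt⟩
    · have h1 : 1 ≤ (i:ℤ) := by exact_mod_cast hi1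
      have h2 : (i:ℤ) + 1 ≤ (n:ℤ) := by omega
      exact Or.inr ⟨i, h1, h2, rfl, (des_s_iff hn hw h1 h2).mp hlt⟩
  · rintro (⟨rfl, hneg⟩ | ⟨i, h1, h2, rfl, hdes⟩)
    · exact ⟨Or.inl rfl, (des_t_iff hn hw).mpr hneg⟩
    · refine ⟨Or.inr ⟨i.toNat, by omega, by omega, by rw [Int.toNat_of_nonneg (by omega)]⟩, ?_⟩
      exact (des_s_iff hn hw h1 h2).mpr hdes

lemma area_des (hz : z ∈ Area n) {i : ℤ} (h1 : 1 ≤ i) (h2 : i + 1 ≤ (n:ℤ)) :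
    z (i + 1) < z i ↔ 0 < z i := by
  have hprop := hz.2 i (i + 1) h1 (by omega) h2
  have hzi : z i ≠ 0 := W.ne_zero hz.1 (by omega)
  have hzi1 : z (i + 1) ≠ 0 := W.ne_zero hz.1 (by omega)
  rcases lt_or_gt_of_ne hzi with h | h <;> rcases lt_or_gt_of_ne hzi1 with h' | h'
  · have := hprop.1 h h'
    constructor <;> intro <;> omega
  · constructor <;> intro <;> omega
  · constructor <;> intro <;> omega
  · have := hprop.2 h h'
    constructor <;> intro <;> omega

lemma des_eq_iff_signs (hn : 2 ≤ n) (hy : y ∈ Area n) (hw : w ∈ Area n) :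
    Des n y = Des n w ↔ ∀ i : ℤ, 1 ≤ i → i + 1 ≤ (n:ℤ) → (0 < y i ↔ 0 < w i) := by
  have hy0 : ∀ i : ℤ, 1 ≤ i → y i ≠ 0 := fun i hi => W.ne_zero hy.1 (by omega)
  have hw0 : ∀ i : ℤ, 1 ≤ i → w i ≠ 0 := fun i hi => W.ne_zero hw.1 (by omega)
  constructor
  · intro h
    have key : ∀ (a b : Equiv.Perm ℤ), a ∈ Area n → b ∈ Area n → Des n a = Des n b →
        ∀ i : ℤ, 1 ≤ i → i + 1 ≤ (n:ℤ) → 0 < a i → 0 < b i := by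
      intro a b ha hb hab i h1 h2 hpos
      have hd : s i ∈ Des n a := (mem_Des_iff hn ha.1).mpr
        (Or.inr ⟨i, h1, h2, rfl, (area_des ha h1 h2).mpr hpos⟩)
      rw [hab] at hd
      rcases (mem_Des_iff hn hb.1).mp hd with ⟨hts, _⟩ | ⟨j, hj1, hj2, hsij, hdes⟩
      · exact absurd hts.symm (t_ne_s h1)
      · have hij : i = j := s_injective h1 hj1 hsij
        subst hij
        exact (area_des hb h1 h2).mp hdes
    intro i h1 h2
    constructor
    · exact key y w hy hw h i h1 h2
    · exact key w y hw hy h.symm i h1 h2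
  · intro h
    ext g
    rw [mem_Des_iff hn hy.1, mem_Des_iff hn hw.1]
    have h1 := h 1 le_rfl (by omega)
    have hy01 := hy0 1 le_rfl
    have hw01 := hw0 1 le_rfl
    constructor
    · rintro (⟨rfl, hneg⟩ | ⟨i, hi1, hi2, rfl, hdes⟩)
      · exact Or.inl ⟨rfl, by omega⟩
      · refine Or.inr ⟨i, hi1, hi2, rfl, ?_⟩
        have hi := h i hi1 hi2
        have := (area_des hy hi1 hi2).mp hdes
        exact (area_des hw hi1 hi2).mpr (by omega)
    · rintro (⟨rfl, hneg⟩ | ⟨i, hi1, hi2, rfl, hdes⟩)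
      · exact Or.inl ⟨rfl, by omega⟩
      · refine Or.inr ⟨i, hi1, hi2, rfl, ?_⟩
        have hi := h i hi1 hi2
        have := (area_des hw hi1 hi2).mp hdes
        exact (area_des hy hi1 hi2).mpr (by omega)

lemma area_opp (hz : z ∈ Area n) {i : ℤ} (h1 : 1 ≤ i) (h2 : i + 1 ≤ (n:ℤ))
    (hz2 : z * s i ∈ Area n) : 0 < z i ↔ z (i + 1) < 0 := by
  have ha : (z * s i) i = z (i + 1) := by
    rw [mul_s_apply h1 (by omega), Equiv.swap_apply_left]
  have hb : (z * s i) (i + 1) = z i := by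
    rw [mul_s_apply h1 (by omega), Equiv.swap_apply_right]
  have hd1 := area_des hz h1 h2
  have hd2 := area_des hz2 h1 h2
  rw [ha, hb] at hd2
  have hne1 : z i ≠ 0 := W.ne_zero hz.1 (by omega)
  have hne2 : z (i + 1) ≠ 0 := W.ne_zero hz.1 (by omega)
  have hne : z i ≠ z (i + 1) := fun hc => by have := z.injective hc; omega
  rcases lt_or_gt_of_ne hne1 with h | h <;> rcases lt_or_gt_of_ne hne2 with h' | h'
  · exfalso
    have c1 : ¬ z (i + 1) < z i := fun hc => by have := hd1.mp hc; omega
    have c2 : ¬ z i < z (i + 1) := fun hc => by have := hd2.mp hc; omega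
    omega
  · constructor <;> intro <;> omega
  · constructor <;> intro <;> omega
  · exfalso
    have c1 := hd1.mpr h
    have c2 := hd2.mpr h'
    omega

lemma step_signs (hn : 2 ≤ n) {y1 w1 g : Equiv.Perm ℤ} (hy1 : y1 ∈ Area n) (hw1 : w1 ∈ Area n)
    (hg : g ∈ gens n) (hy2 : y1 * g ∈ Area n) (hw2 : w1 * g ∈ Area n)
    (hsign : ∀ i : ℤ, 1 ≤ i → i + 1 ≤ (n:ℤ) → (0 < y1 i ↔ 0 < w1 i)) :
    ∀ i : ℤ, 1 ≤ i → i + 1 ≤ (n:ℤ) → (0 < (y1 * g) i ↔ 0 < (w1 * g) i) := by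
  intro i h1 h2
  rcases hg with h | ⟨j, hj1, hj2, rfl⟩
  · subst h
    by_cases hi1 : i = 1
    · subst hi1
      rw [mul_t_apply_one, mul_t_apply_one, hy1.1.1 1, hw1.1.1 1]
      have hiff := hsign 1 le_rfl (by omega)
      have hy0 := W.ne_zero hy1.1 (show (1:ℤ) ≠ 0 by omega)
      have hw0 := W.ne_zero hw1.1 (show (1:ℤ) ≠ 0 by omega)
      omega
    · have hi2 : 2 ≤ i := by omega
      rw [mul_t_apply_of hi2, mul_t_apply_of hi2]
      exact hsign i h1 h2
  · have hj1' : 1 ≤ (j:ℤ) := by exact_mod_cast hj1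
    have hj2' : (j:ℤ) + 1 ≤ (n:ℤ) := by omega
    rw [mul_s_apply hj1' h1, mul_s_apply hj1' h1, swap_fun]
    split_ifs with hij hij1
    · -- i = j, value at j + 1
      by_cases hjtop : (j:ℤ) + 1 + 1 ≤ (n:ℤ)
      · exact hsign ((j:ℤ) + 1) (by omega) hjtop
      · have hoy := area_opp hy1 hj1' hj2' hy2
        have how := area_opp hw1 hj1' hj2' hw2
        have hiffj := hsign j hj1' hj2'
        have hy0 := W.ne_zero hy1.1 (show (j:ℤ) + 1 ≠ 0 by omega)
        have hw0 := W.ne_zero hw1.1 (show (j:ℤ) + 1 ≠ 0 by omega)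
        omega
    · exact hsign j hj1' hj2'
    · exact hsign i h1 h2

end DesArea
theorem statement6 (n : ℕ) (hn : 2 ≤ n) (y w pp : Equiv.Perm ℤ)
    (hy : y ∈ Area n) (hw : w ∈ Area n) (hpp : pp ∈ W n)
    (hDes : Des n y = Des n w)
    (hyA : ∀ τ, Suf n τ pp → y * τ⁻¹ ∈ Area n)
    (hwA : ∀ τ, Suf n τ pp → w * τ⁻¹ ∈ Area n) :
    ∀ τ, Suf n τ pp → Des n (y * τ⁻¹) = Des n (w * τ⁻¹) := by
  suffices H : ∀ k : ℕ, ∀ τ : Equiv.Perm ℤ, Suf n τ pp → len n τ = k →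
      Des n (y * τ⁻¹) = Des n (w * τ⁻¹) by
    intro τ hτ
    exact H (len n τ) τ hτ rfl
  intro k
  induction k using Nat.strong_induction_on with
  | _ k IH =>
  intro τ hτ hlen
  obtain ⟨z, hz, hzeq, hlenpp⟩ := hτ
  have hτmem : Suf n τ pp := ⟨z, hz, hzeq, hlenpp⟩
  have hτW : τ ∈ W n := by
    have hτz : τ = z⁻¹ * pp := by rw [hzeq]; group
    rw [hτz]
    exact mul_mem_W (inv_mem_W hz) hpp
  have hτD : len n τ = Dstat n τ := len_eq_Dstat hn hτW
  rcases Nat.eq_zero_or_pos k with hk0 | hkpos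
  · subst hk0
    have hτ1 : τ = 1 := eq_one_of_Dstat_eq_zero (by omega) hτW (by omega)
    rw [hτ1]
    simpa using hDes
  · obtain ⟨l, hl1, hl2, hl3⟩ := exists_min_word (exprW_of_mem hn hτW)
    have hlne : l ≠ [] := by
      intro h
      rw [h] at hl1
      simp at hl1
      omega
    obtain ⟨g, l2, rfl⟩ : ∃ g l2, l = g :: l2 := by
      cases l with
      | nil => exact absurd rfl hlne
      | cons g l2 => exact ⟨g, l2, rfl⟩
    have hg : g ∈ gens n := hl2 g (List.mem_cons_self)
    have hl2g : ∀ x ∈ l2, x ∈ gens n := fun x hx => hl2 x (List.mem_cons_of_mem _ hx)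
    set τ' := l2.prod with hτ'def
    have hτeq : τ = g * τ' := by rw [← hl3, List.prod_cons]
    have hτ'W : τ' ∈ W n := prod_mem_W hn hl2g
    have hl2len : l2.length = k - 1 := by
      have : (g :: l2).length = k := by rw [hl1, hlen]
      simp at this
      omega
    have hτ'len_le : len n τ' ≤ k - 1 := by
      have := len_le hl2g hτ'def.symm
      omega
    have hτle : len n τ ≤ len n τ' + 1 := by
      obtain ⟨m, hm1, hm2, hm3⟩ := exists_min_word (exprW_of_mem hn hτ'W)
      have hprod : (g :: m).prod = τ := by rw [List.prod_cons, hm3, hτeq]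
      have hle := len_le (l := g :: m)
        (by
          intro x hx
          rcases List.mem_cons.mp hx with h | h
          · rw [h]; exact hg
          · exact hm2 x h) hprod
      rw [List.length_cons, hm1] at hle
      omega
    have hτ'len : len n τ' = k - 1 := by omega
    have hzg : z * g ∈ W n := mul_mem_W hz (gens_subset_W hn hg)
    have hzgle : len n (z * g) ≤ len n z + 1 := len_mul_gen_le hn hz hg
    have hppeq : pp = (z * g) * τ' := by rw [hzeq, hτeq, mul_assoc]
    have hub : len n pp ≤ len n (z * g) + len n τ' := by
      rw [hppeq]
      exact len_mul_le hn hzg hτ'W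
    have hSuf' : Suf n τ' pp := ⟨z * g, hzg, hppeq, by omega⟩
    have hIH := IH (k - 1) (by omega) τ' hSuf' hτ'len
    have hy1 : y * τ'⁻¹ ∈ Area n := hyA τ' hSuf'
    have hw1 : w * τ'⁻¹ ∈ Area n := hwA τ' hSuf'
    have hginv : g⁻¹ = g := inv_eq_of_mul_eq_one_right (gens_invol hg)
    have hrew : ∀ v : Equiv.Perm ℤ, v * τ⁻¹ = (v * τ'⁻¹) * g := by
      intro v
      rw [hτeq, mul_inv_rev, hginv, ← mul_assoc]
    have hy2 : (y * τ'⁻¹) * g ∈ Area n := by rw [← hrew y]; exact hyA τ hτmem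
    have hw2 : (w * τ'⁻¹) * g ∈ Area n := by rw [← hrew w]; exact hwA τ hτmem
    rw [hrew y, hrew w]
    rw [des_eq_iff_signs hn hy2 hw2]
    exact step_signs hn hy1 hw1 hg hy2 hw2 ((des_eq_iff_signs hn hy1 hw1).mp hIH)

end BnPaper
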